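/- arXiv:2006.11657 — 2 statements merged into one kernel-verified Lean document; each statement's English description precedes it below -/
import Mathlib

section
/- Let z be a message with seq z ≥ n (n ≥ 1), let T be the length-n prefix of the path of z, and let P be a partial sequence such that every p ∈ P with seq p ≤ n is in the path of z. Then P is consistent with T. -/
/-- Iterate the parent map `n` times (in `Option`). -/
def parentIter {M : Type*} (parent : M → Option M) : ℕ → M → Option M
  | 0, m => some m
  | n + 1, m => (parent m).bind (parentIter parent n)

/-- `p` is in the path of `u`. -/
def InPath {M : Type*} (seq : M → ℕ) (parent : M → Option M) (p u : M) : Prop :=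
  seq p ≤ seq u ∧ parentIter parent (seq u - seq p) u = some p

/-- `L = (t_1, …, t_n)` is a total sequence (of length `L.length`). -/
def IsTotalSeq {M : Type*} (seq : M → ℕ) (parent : M → Option M) (L : List M) : Prop :=
  (∀ (i : ℕ) (h : i < L.length), seq L[i] = i + 1) ∧
  (∀ (i : ℕ) (h : i + 1 < L.length), parent L[i + 1] = some (L[i]'(by omega)))

/-- A finite set of messages is a partial sequence if no two have the same seq number. -/
def IsPartialSeq {M : Type*} (seq : M → ℕ) (P : Finset M) : Prop :=
  ∀ p ∈ P, ∀ q ∈ P, seq p = seq q → p = q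

/-- A partial sequence `P` is consistent with a total sequence `T`. -/
def ConsistentWith {M : Type*} (seq : M → ℕ) (P : Finset M) (T : List M) : Prop :=
  ∀ p ∈ P, seq p ≤ T.length → T[seq p - 1]? = some p

/-- Let `z` be a message with `seq z ≥ n` (`n ≥ 1`), let `T` be the
length-`n` prefix of the path of `z`, and let `P` be a partial sequence such
that every `p ∈ P` with `seq p ≤ n` is in the path of `z`. Then `P` is
consistent with `T`. -/
theorem consistent_of_inPath {M : Type*} (seq : M → ℕ) (parent : M → Option M)
    (hseq : ∀ m, 1 ≤ seq m)
    (hpar : ∀ t p, parent t = some p → seq t = seq p + 1)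
    (hnone : ∀ t, parent t = none ↔ seq t = 1)
    (n : ℕ) (hn : 1 ≤ n) (z : M) (hz : n ≤ seq z)
    (L : List M) (hL : IsTotalSeq seq parent L) (hLz : L.getLast? = some z)
    (T : List M) (hT : T = L.take n)
    (P : Finset M) (hP : IsPartialSeq seq P)
    (hPz : ∀ p ∈ P, seq p ≤ n → InPath seq parent p z) :
    ConsistentWith seq P T := by
  -- key lemma: iterating parent from L[i+k] lands on L[i]
  have key : ∀ k i (h : i + k < L.length),
      parentIter parent k (L[i + k]'h) = some (L[i]'(by omega)) := by
    intro k
    induction k with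
    | zero => intro i h; simp [parentIter]
    | succ k ih =>
      intro i h
      have hp := hL.2 (i + k) (by omega)
      have : L[i + (k + 1)]'h = L[(i + k) + 1]'(by omega) := rfl
      rw [this]
      simp only [parentIter, hp, Option.bind_some]
      exact ih i (by omega)
  -- L is nonempty and z = last element
  have hne : L ≠ [] := by
    intro h; rw [h] at hLz; simp at hLz
  have hlen : 0 < L.length := List.length_pos_iff.mpr hne
  have hzL : z = L[L.length - 1]'(by omega) := by
    rw [List.getLast?_eq_getLast hne, List.getLast_eq_getElem] at hLz
    exact (Option.some_injective _ hLz).symm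
  have hseqz : seq z = L.length := by
    rw [hzL, hL.1 (L.length - 1) (by omega)]; omega
  intro p hpP hple
  have hTlen : T.length = n := by
    rw [hT, List.length_take]; omega
  rw [hTlen] at hple
  obtain ⟨hle, hiter⟩ := hPz p hpP hple
  have hp1 : 1 ≤ seq p := hseq p
  have heq : (seq p - 1) + (seq z - seq p) = L.length - 1 := by omega
  have := key (seq z - seq p) (seq p - 1) (by omega)
  have hidx : L[(seq p - 1) + (seq z - seq p)]'(by omega) = L[L.length - 1]'(by omega) := by
    simp only [heq]
  rw [hidx, ← hzL] at this
  have hpL : p = L[seq p - 1]'(by omega) := by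
    rw [hiter] at this
    exact (Option.some_injective _ this)
  rw [hT, List.getElem?_take, if_pos (by omega), List.getElem?_eq_getElem (by omega)]
  exact congrArg some hpL.symm
end

section
/- If two messages t and u have a common ancestor (some message in the path of both), then there is a last common ancestor: a message q in the path of both t and u such that every common ancestor of t and u is in the path of q. Moreover, if neither t is in the path of u nor u is in the path of t, then seq q + 1 ≤ seq t, seq q + 1 ≤ seq u, and the (unique) message at sequence number seq q + 1 in the path of t is distinct from the (unique) message at sequence number seq q + 1 in the path of u. -/
lemma parentIter_add {M : Type*} (parent : M → Option M) (a b : ℕ) (u : M) :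
    parentIter parent (a + b) u = (parentIter parent a u).bind (parentIter parent b) := by
  induction a generalizing u with
  | zero => simp [parentIter]
  | succ a ih =>
    rw [show a + 1 + b = (a + b) + 1 from by omega]
    simp only [parentIter]
    cases parent u with
    | none => simp
    | some x => simp [ih x]

lemma parentIter_seq {M : Type*} (seq : M → ℕ) (parent : M → Option M)
    (hpar : ∀ x p, parent x = some p → seq x = seq p + 1) :
    ∀ (n : ℕ) (u p : M), parentIter parent n u = some p → seq u = seq p + n := by
  intro n
  induction n with
  | zero => intro u p h; simp [parentIter] at h; subst h; rfl
  | succ n ih =>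
    intro u p h
    simp only [parentIter] at h
    cases hu : parent u with
    | none => rw [hu] at h; simp at h
    | some x =>
      rw [hu] at h; simp at h
      have := ih x p h
      have := hpar u x hu
      omega

lemma inPath_of_le {M : Type*} (seq : M → ℕ) (parent : M → Option M)
    (hpar : ∀ x p, parent x = some p → seq x = seq p + 1)
    {c q t : M} (hq : InPath seq parent q t) (hc : InPath seq parent c t)
    (hle : seq c ≤ seq q) : InPath seq parent c q := by
  obtain ⟨hq1, hq2⟩ := hq
  obtain ⟨hc1, hc2⟩ := hc
  have heq : seq t - seq c = (seq t - seq q) + (seq q - seq c) := by omega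
  rw [heq, parentIter_add, hq2] at hc2
  simp at hc2
  exact ⟨hle, hc2⟩

/-- If `t` and `u` have a common ancestor, then they have a last
common ancestor `q`; moreover, if neither is in the path of the other, then
`seq q + 1 ≤ seq t`, `seq q + 1 ≤ seq u`, and the unique messages at sequence
number `seq q + 1` in the respective paths of `t` and `u` are distinct. -/
theorem last_common_ancestor {M : Type*} (seq : M → ℕ) (parent : M → Option M)
    (hseq : ∀ m, 1 ≤ seq m)
    (hpar : ∀ x p, parent x = some p → seq x = seq p + 1)
    (hnone : ∀ x, parent x = none ↔ seq x = 1)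
    (t u : M) (hca : ∃ c, InPath seq parent c t ∧ InPath seq parent c u) :
    ∃ q, InPath seq parent q t ∧ InPath seq parent q u ∧
      (∀ c, InPath seq parent c t → InPath seq parent c u → InPath seq parent c q) ∧
      ((¬ InPath seq parent t u ∧ ¬ InPath seq parent u t) →
        seq q + 1 ≤ seq t ∧ seq q + 1 ≤ seq u ∧
        ∀ r l, InPath seq parent r t → seq r = seq q + 1 →
          InPath seq parent l u → seq l = seq q + 1 → r ≠ l) := by

  classical
  obtain ⟨c0, hc0t, hc0u⟩ := hca
  set P : ℕ → Prop := fun n => ∃ c, parentIter parent n t = some c ∧ InPath seq parent c u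
    with hPdef
  have hP : ∃ n, P n := ⟨seq t - seq c0, c0, hc0t.2, hc0u⟩
  set n := Nat.find hP with hn
  obtain ⟨q, hq, hqu⟩ := Nat.find_spec hP
  rw [← hn] at hq
  have hseqt : seq t = seq q + n := parentIter_seq seq parent hpar n t q hq
  have hqt : InPath seq parent q t := by
    refine ⟨by omega, ?_⟩
    rwa [show seq t - seq q = n from by omega]
  have hmax : ∀ c, InPath seq parent c t → InPath seq parent c u → InPath seq parent c q := by
    intro c hct hcu
    have hPc : P (seq t - seq c) := ⟨c, hct.2, hcu⟩
    have hle : n ≤ seq t - seq c := Nat.find_min' hP hPc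
    have : seq c ≤ seq q := by have := hct.1; omega
    exact inPath_of_le seq parent hpar hqt hct this
  refine ⟨q, hqt, hqu, hmax, ?_⟩
  rintro ⟨h1, h2⟩
  have hqlt : seq q + 1 ≤ seq t := by
    rcases Nat.lt_or_ge (seq q) (seq t) with h | h
    · omega
    · exfalso
      have : n = 0 := by omega
      rw [this] at hq
      simp [parentIter] at hq
      subst hq
      exact h1 hqu
  have hqlu : seq q + 1 ≤ seq u := by
    rcases Nat.lt_or_ge (seq q) (seq u) with h | h
    · omega
    · exfalso
      have h0 : seq u - seq q = 0 := by omega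
      have := hqu.2
      rw [h0] at this
      simp [parentIter] at this
      subst this
      exact h2 hqt
  refine ⟨hqlt, hqlu, ?_⟩
  intro r l hrt hr hlu hl heq
  subst heq
  have := hmax r hrt hlu
  have := this.1
  omega
end
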